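/- Let L be a finite lattice, let E ⊆ L × L be a set of directed edges containing all pairs (u,v) with u ≤ v, and let d : L × L → ℝ be a degree function with 0 < d(u,v) ≤ 1 for every (u,v) ∈ E and d(u,v) = 1 for every pair with u ≤ v. For a nonempty subset O ⊆ L, let Ô(v) be the supremum of the lengths of all directed paths from an element of O to v (and 0 if no such path exists), where a path is a finite sequence v₁, v₂, …, vₙ with all consecutive pairs (vᵢ,vᵢ₊₁) ∈ E and its length is the product Π d(vᵢ,vᵢ₊₁) of the degrees of its edges. Then the extension Ô of O is a fuzzy filter in L: for every t ∈ [0,1] the level set {s ∈ L : Ô(s) ≥ t} is either empty or a filter of L; equivalently, Ô is monotone, i.e. s ≤ s′ implies Ô(s) ≤ Ô(s′). -/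

import Mathlib

/-- A filter of a lattice, as a set: a nonempty, upward-closed subset. -/
def IsSetFilter {L : Type*} [Lattice L] (F : Set L) : Prop :=
  F.Nonempty ∧ ∀ c ∈ F, ∀ c', c ≤ c' → c' ∈ F

/-- The extension Ô of a set O of properties in a directed weighted graph (E, d)
on L: Ô(v) is the supremum of the lengths of all directed paths from an element of
O to v (and 0 if there is no such path), where the length of a path is the product
of the degrees of its edges. -/
noncomputable def pathExt {L : Type*} (E : Set (L × L)) (d : L → L → ℝ)
    (O : Set L) (v : L) : ℝ :=
  sSup ({0} ∪ { x : ℝ | ∃ l : List L, l ≠ [] ∧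
    l.Chain' (fun a b => (a, b) ∈ E) ∧
    (∃ s ∈ O, l.head? = some s) ∧ l.getLast? = some v ∧
    x = ((l.zip l.tail).map fun p => d p.1 p.2).prod })

lemma zip_tail_append {L : Type*} (y : L) :
    ∀ (l : List L) (hl : l ≠ []),
      ((l ++ [y]).zip (l ++ [y]).tail) = (l.zip l.tail) ++ [(l.getLast hl, y)]
  | [], h => absurd rfl h
  | [a], _ => rfl
  | (a :: b :: l), _ => by
      have ih := zip_tail_append y (b :: l) (by simp)
      simp only [List.cons_append, List.zip_cons_cons, List.tail_cons] at ih ⊢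
      rw [ih]
      simp [List.getLast]

lemma prod_mem_le_one : ∀ (l : List ℝ), (∀ x ∈ l, 0 ≤ x ∧ x ≤ 1) → 0 ≤ l.prod ∧ l.prod ≤ 1
  | [], _ => by simp
  | (a :: l), h => by
      obtain ⟨h0, h1⟩ := h a (List.mem_cons_self)
      obtain ⟨hp0, hp1⟩ := prod_mem_le_one l (fun x hx => h x (List.mem_cons_of_mem a hx))
      rw [List.prod_cons]
      exact ⟨mul_nonneg h0 hp0, mul_le_one₀ h1 hp0 hp1⟩

lemma chain'_mem_zip {L : Type*} {R : L → L → Prop} :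
    ∀ {l : List L}, l.Chain' R → ∀ p ∈ l.zip l.tail, R p.1 p.2
  | [], _, p, hp => by simp at hp
  | [a], _, p, hp => by simp at hp
  | (a :: b :: l), h, p, hp => by
      rw [List.Chain', List.isChain_cons_cons] at h
      simp only [List.tail_cons, List.zip_cons_cons, List.mem_cons] at hp
      rcases hp with rfl | hp
      · exact h.1
      · exact chain'_mem_zip h.2 p hp

theorem stmt16 {L : Type*} [Lattice L] [Fintype L]
    (E : Set (L × L)) (d : L → L → ℝ)
    (hE : ∀ u v : L, u ≤ v → (u, v) ∈ E)
    (hd : ∀ p ∈ E, 0 < d p.1 p.2 ∧ d p.1 p.2 ≤ 1)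
    (hd1 : ∀ u v : L, u ≤ v → d u v = 1)
    (O : Set L) (hO : O.Nonempty) :
    (∀ t : ℝ, 0 ≤ t → t ≤ 1 →
      {s : L | t ≤ pathExt E d O s} = ∅ ∨ IsSetFilter {s : L | t ≤ pathExt E d O s}) ∧
    (∀ s s' : L, s ≤ s' → pathExt E d O s ≤ pathExt E d O s') := by
  set S : L → Set ℝ := fun v => {0} ∪ { x : ℝ | ∃ l : List L, l ≠ [] ∧
    l.Chain' (fun a b => (a, b) ∈ E) ∧
    (∃ s ∈ O, l.head? = some s) ∧ l.getLast? = some v ∧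
    x = ((l.zip l.tail).map fun p => d p.1 p.2).prod } with hS
  have hPE : ∀ v, pathExt E d O v = sSup (S v) := fun v => rfl
  -- bound
  have hbdd : ∀ v, ∀ x ∈ S v, x ≤ 1 := by
    intro v x hx
    rcases hx with hx | ⟨l, _, hchain, _, _, rfl⟩
    · simp at hx; simp [hx]
    · refine (prod_mem_le_one _ ?_).2
      intro a ha
      simp only [List.mem_map] at ha
      obtain ⟨p, hp, rfl⟩ := ha
      exact ⟨(hd p (chain'_mem_zip hchain p hp)).1.le, (hd p (chain'_mem_zip hchain p hp)).2⟩
  have hBdd : ∀ v, BddAbove (S v) := fun v => ⟨1, fun x hx => hbdd v x hx⟩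
  have hne : ∀ v, (S v).Nonempty := fun v => ⟨0, Or.inl rfl⟩
  -- monotonicity of S
  have hmono : ∀ s s' : L, s ≤ s' → S s ⊆ S s' := by
    intro s s' hss x hx
    rcases hx with hx | ⟨l, hl, hchain, hhead, hlast, rfl⟩
    · exact Or.inl hx
    · refine Or.inr ⟨l ++ [s'], by simp, ?_, ?_, by simp, ?_⟩
      · apply List.IsChain.append hchain (List.isChain_singleton _)
        intro a ha b hb
        simp only [List.head?_cons, Option.mem_def, Option.some.injEq] at hb
        subst hb
        rw [List.getLast?_eq_getLast hl, Option.mem_def, Option.some.injEq] at ha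
        subst ha
        rw [List.getLast?_eq_getLast hl] at hlast
        obtain rfl : l.getLast hl = s := by injection hlast
        exact hE _ _ hss
      · obtain ⟨t, ht, hh⟩ := hhead
        exact ⟨t, ht, by rw [List.head?_append_of_ne_nil _ hl] at *; exact hh⟩
      · rw [zip_tail_append s' l hl]
        rw [List.getLast?_eq_getLast hl] at hlast
        obtain rfl : l.getLast hl = s := by injection hlast
        simp [hd1 _ _ hss]
  have hmonoP : ∀ s s' : L, s ≤ s' → pathExt E d O s ≤ pathExt E d O s' := by
    intro s s' h
    rw [hPE, hPE]
    exact csSup_le_csSup (hBdd s') (hne s) (hmono s s' h)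
  refine ⟨?_, hmonoP⟩
  intro t ht0 ht1
  right
  obtain ⟨s0, hs0⟩ := hO
  have h1 : ∀ v, s0 ≤ v → t ≤ pathExt E d O v := by
    intro v hv
    have hx : (1 : ℝ) ∈ S v := by
      refine Or.inr ⟨[s0, v], by simp, ?_, ⟨s0, hs0, rfl⟩, by simp, by simp [hd1 _ _ hv]⟩
      simp [List.Chain', List.isChain_pair, hE _ _ hv]
    calc t ≤ 1 := ht1
    _ ≤ sSup (S v) := le_csSup (hBdd v) hx
  constructor
  · exact ⟨s0 ⊔ s0, h1 _ (by simp)⟩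
  · intro c hc c' hcc'
    exact le_trans hc (hmonoP c c' hcc')
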